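/- Suppose that for every Banach space E over 𝕂 a collection A(E) of bounded subsets of E has been assigned such that every singleton {x}, x ∈ E, belongs to A(E), and such that u(A) ∈ A(F) for all Banach spaces E, F, every A ∈ A(E) and every bounded linear operator u : E → F. Then: (i) for all Banach spaces E, F, the topology τ_A of uniform convergence on the sets of A(E) is a linear topology on L(E;F) (it makes L(E;F) a topological vector space); (ii) τ_A is an ideal topology, i.e., for every operator ideal I the assignment (E,F) ↦ (τ_A-closure of I(E;F) in L(E;F)) is again an operator ideal; and (iii) τ_P ⊆ τ_A ⊆ the operator norm topology on each L(E;F). -/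

import Mathlib

open Filter Topology Metric Set Pointwise

universe u

variable (𝕜 : Type u) [RCLike 𝕜]

/-- An assignment, to each pair of Banach spaces over `𝕜`, of a set of bounded linear
operators between them. -/
abbrev BanachOpClass (𝕜 : Type u) [RCLike 𝕜] : Type (u + 1) :=
  ∀ (E F : Type u) [NormedAddCommGroup E] [NormedSpace 𝕜 E] [CompleteSpace E]
    [NormedAddCommGroup F] [NormedSpace 𝕜 F] [CompleteSpace F], Set (E →L[𝕜] F)

/-- A bounded linear operator has finite rank if its range is finite dimensional. -/
def IsFiniteRankOp {E F : Type u} [NormedAddCommGroup E] [NormedSpace 𝕜 E]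
    [NormedAddCommGroup F] [NormedSpace 𝕜 F] (u : E →L[𝕜] F) : Prop :=
  FiniteDimensional 𝕜 (LinearMap.range (u : E →ₗ[𝕜] F))

/-- Operator ideals in the sense of Pietsch. -/
structure IsOperatorIdeal (C : BanachOpClass 𝕜) : Prop where
  smul_mem : ∀ (E F : Type u) [NormedAddCommGroup E] [NormedSpace 𝕜 E] [CompleteSpace E]
    [NormedAddCommGroup F] [NormedSpace 𝕜 F] [CompleteSpace F]
    (a : 𝕜) (u : E →L[𝕜] F), u ∈ C E F → a • u ∈ C E F
  add_mem : ∀ (E F : Type u) [NormedAddCommGroup E] [NormedSpace 𝕜 E] [CompleteSpace E]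
    [NormedAddCommGroup F] [NormedSpace 𝕜 F] [CompleteSpace F]
    (u v : E →L[𝕜] F), u ∈ C E F → v ∈ C E F → u + v ∈ C E F
  finiteRank_mem : ∀ (E F : Type u) [NormedAddCommGroup E] [NormedSpace 𝕜 E] [CompleteSpace E]
    [NormedAddCommGroup F] [NormedSpace 𝕜 F] [CompleteSpace F]
    (u : E →L[𝕜] F), IsFiniteRankOp 𝕜 u → u ∈ C E F
  comp_mem : ∀ (E F G H : Type u)
    [NormedAddCommGroup E] [NormedSpace 𝕜 E] [CompleteSpace E]
    [NormedAddCommGroup F] [NormedSpace 𝕜 F] [CompleteSpace F]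
    [NormedAddCommGroup G] [NormedSpace 𝕜 G] [CompleteSpace G]
    [NormedAddCommGroup H] [NormedSpace 𝕜 H] [CompleteSpace H]
    (u : E →L[𝕜] F) (v : F →L[𝕜] G) (w : G →L[𝕜] H),
    v ∈ C F G → w.comp (v.comp u) ∈ C E H

/-- An assignment of a topology to each space of bounded operators between Banach spaces. -/
abbrev OpTopologyAssignment (𝕜 : Type u) [RCLike 𝕜] : Type (u + 1) :=
  ∀ (E F : Type u) [NormedAddCommGroup E] [NormedSpace 𝕜 E] [CompleteSpace E]
    [NormedAddCommGroup F] [NormedSpace 𝕜 F] [CompleteSpace F],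
    TopologicalSpace (E →L[𝕜] F)

/-- The closure of an operator class with respect to an assignment of topologies. -/
def closureClass (τ : OpTopologyAssignment 𝕜) (C : BanachOpClass 𝕜) (E F : Type u)
    [NormedAddCommGroup E] [NormedSpace 𝕜 E] [CompleteSpace E]
    [NormedAddCommGroup F] [NormedSpace 𝕜 F] [CompleteSpace F] : Set (E →L[𝕜] F) :=
  @closure _ (τ E F) (C E F)

/-- An ideal topology: a linear topology on each operator space such that the closure of
any operator ideal is again an operator ideal. -/
structure IsIdealTopology (τ : OpTopologyAssignment 𝕜) : Prop where
  topologicalAddGroup : ∀ (E F : Type u)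
    [NormedAddCommGroup E] [NormedSpace 𝕜 E] [CompleteSpace E]
    [NormedAddCommGroup F] [NormedSpace 𝕜 F] [CompleteSpace F],
    @IsTopologicalAddGroup (E →L[𝕜] F) (τ E F) _
  continuousSMul : ∀ (E F : Type u)
    [NormedAddCommGroup E] [NormedSpace 𝕜 E] [CompleteSpace E]
    [NormedAddCommGroup F] [NormedSpace 𝕜 F] [CompleteSpace F],
    @ContinuousSMul 𝕜 (E →L[𝕜] F) _ _ (τ E F)
  closure_isOperatorIdeal : ∀ C : BanachOpClass 𝕜,
    IsOperatorIdeal 𝕜 C → IsOperatorIdeal 𝕜 (closureClass 𝕜 τ C)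

/-- A Banach space `E` has the `(I, J, τ)`-approximation property if `I(F;E)` is contained in
the `τ`-closure of `J(F;E)` for every Banach space `F`. -/
def HasAP (I J : BanachOpClass 𝕜) (τ : OpTopologyAssignment 𝕜)
    (E : Type u) [NormedAddCommGroup E] [NormedSpace 𝕜 E] [CompleteSpace E] : Prop :=
  ∀ (F : Type u) [NormedAddCommGroup F] [NormedSpace 𝕜 F] [CompleteSpace F],
    I F E ⊆ @closure _ (τ F E) (J F E)

/-- A Banach space `E` has the `(I, J, τ)`-weak approximation property if `I(E;E)` is contained
in the `τ`-closure of `J(E;E)`. -/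
def HasWAP (I J : BanachOpClass 𝕜) (τ : OpTopologyAssignment 𝕜)
    (E : Type u) [NormedAddCommGroup E] [NormedSpace 𝕜 E] [CompleteSpace E] : Prop :=
  I E E ⊆ @closure _ (τ E E) (J E E)

/-- The topology on `E →L[𝕜] F` of uniform convergence on the sets of the family `𝔖`. -/
def uniformOnTop (E F : Type u) [NormedAddCommGroup E] [NormedSpace 𝕜 E] [CompleteSpace E]
    [NormedAddCommGroup F] [NormedSpace 𝕜 F] [CompleteSpace F] (𝔖 : Set (Set E)) :
    TopologicalSpace (E →L[𝕜] F) :=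
  TopologicalSpace.induced (fun u => UniformOnFun.ofFun 𝔖 (⇑u))
    (UniformOnFun.topologicalSpace E F 𝔖)

/-- The operator norm topology on each space of operators. -/
def normTopology (E F : Type u)
    [NormedAddCommGroup E] [NormedSpace 𝕜 E] [CompleteSpace E]
    [NormedAddCommGroup F] [NormedSpace 𝕜 F] [CompleteSpace F] :
    TopologicalSpace (E →L[𝕜] F) := inferInstance

/-- The topology of pointwise convergence (uniform convergence on finite sets; the strong
operator topology). -/
def ptwiseTopology (E F : Type u)
    [NormedAddCommGroup E] [NormedSpace 𝕜 E] [CompleteSpace E]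
    [NormedAddCommGroup F] [NormedSpace 𝕜 F] [CompleteSpace F] :
    TopologicalSpace (E →L[𝕜] F) := uniformOnTop 𝕜 E F {s : Set E | s.Finite}

/-- The compact-open topology: uniform convergence on compact sets. -/
def compactOpenTopology (E F : Type u)
    [NormedAddCommGroup E] [NormedSpace 𝕜 E] [CompleteSpace E]
    [NormedAddCommGroup F] [NormedSpace 𝕜 F] [CompleteSpace F] :
    TopologicalSpace (E →L[𝕜] F) := uniformOnTop 𝕜 E F {K : Set E | IsCompact K}

/-- An assignment of a family of subsets to each Banach space. -/
abbrev SetFamilyAssignment (𝕜 : Type u) [RCLike 𝕜] : Type (u + 1) :=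
  ∀ (E : Type u) [NormedAddCommGroup E] [NormedSpace 𝕜 E] [CompleteSpace E], Set (Set E)

/-- The topology of uniform convergence on the sets of the family `𝒜 E`. -/
def famTopology (𝒜 : SetFamilyAssignment 𝕜) (E F : Type u)
    [NormedAddCommGroup E] [NormedSpace 𝕜 E] [CompleteSpace E]
    [NormedAddCommGroup F] [NormedSpace 𝕜 F] [CompleteSpace F] :
    TopologicalSpace (E →L[𝕜] F) := uniformOnTop 𝕜 E F (𝒜 E)

/-- The class of finite rank bounded operators. -/
def finRankClass (E F : Type u)
    [NormedAddCommGroup E] [NormedSpace 𝕜 E] [CompleteSpace E]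
    [NormedAddCommGroup F] [NormedSpace 𝕜 F] [CompleteSpace F] : Set (E →L[𝕜] F) :=
  {u | IsFiniteRankOp 𝕜 u}

/-- The class of compact operators: those mapping the closed unit ball to a relatively
compact set. -/
def compactClass (E F : Type u)
    [NormedAddCommGroup E] [NormedSpace 𝕜 E] [CompleteSpace E]
    [NormedAddCommGroup F] [NormedSpace 𝕜 F] [CompleteSpace F] : Set (E →L[𝕜] F) :=
  {u | IsCompact (closure (⇑u '' Metric.closedBall 0 1))}

/-- The class of all bounded operators. -/
def boundedClass (E F : Type u)
    [NormedAddCommGroup E] [NormedSpace 𝕜 E] [CompleteSpace E]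
    [NormedAddCommGroup F] [NormedSpace 𝕜 F] [CompleteSpace F] : Set (E →L[𝕜] F) :=
  Set.univ

/-- A witness that `A` is an `I`-bounded subset of `E`: a Banach space `F` and an operator
`u ∈ I(F;E)` with `A ⊆ u(B_F)`. -/
structure IBddWitness (C : BanachOpClass 𝕜) (E : Type u) [NormedAddCommGroup E]
    [NormedSpace 𝕜 E] [CompleteSpace E] (A : Set E) : Type (u + 1) where
  F : Type u
  [iG : NormedAddCommGroup F]
  [iS : NormedSpace 𝕜 F]
  [iC : CompleteSpace F]
  u : F →L[𝕜] E
  hu : u ∈ C F E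
  hA : A ⊆ ⇑u '' Metric.closedBall 0 1

/-- `C_I(E)`: the `I`-bounded subsets of `E`. -/
def IBddSets (C : BanachOpClass 𝕜) (E : Type u) [NormedAddCommGroup E]
    [NormedSpace 𝕜 E] [CompleteSpace E] : Set (Set E) :=
  {A | Nonempty (IBddWitness 𝕜 C E A)}

/-- The topology `τ_{C_I}` of uniform convergence on `I`-bounded sets. -/
def iBddTopology (C : BanachOpClass 𝕜) (E F : Type u)
    [NormedAddCommGroup E] [NormedSpace 𝕜 E] [CompleteSpace E]
    [NormedAddCommGroup F] [NormedSpace 𝕜 F] [CompleteSpace F] :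
    TopologicalSpace (E →L[𝕜] F) := uniformOnTop 𝕜 E F (IBddSets 𝕜 C E)

/-- `L_I`: the class of `I`-bounded operators, i.e. those mapping the closed unit ball
to an `I`-bounded set. -/
def LBddClass (C : BanachOpClass 𝕜) (E F : Type u)
    [NormedAddCommGroup E] [NormedSpace 𝕜 E] [CompleteSpace E]
    [NormedAddCommGroup F] [NormedSpace 𝕜 F] [CompleteSpace F] : Set (E →L[𝕜] F) :=
  {T | ⇑T '' Metric.closedBall 0 1 ∈ IBddSets 𝕜 C F}

/-- A witness that `B` is an `I`-compact subset of `E`. -/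
structure ICptWitness (C : BanachOpClass 𝕜) (E : Type u) [NormedAddCommGroup E]
    [NormedSpace 𝕜 E] [CompleteSpace E] (B : Set E) : Type (u + 1) where
  F : Type u
  [iG : NormedAddCommGroup F]
  [iS : NormedSpace 𝕜 F]
  [iC : CompleteSpace F]
  K : Set F
  hK : IsCompact K
  u : F →L[𝕜] E
  hu : u ∈ C F E
  A : Set E
  hA : A ⊆ ⇑u '' K
  hB : B = closure A

/-- `K_I(E)`: the `I`-compact subsets of `E`. -/
def ICptSets (C : BanachOpClass 𝕜) (E : Type u) [NormedAddCommGroup E]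
    [NormedSpace 𝕜 E] [CompleteSpace E] : Set (Set E) :=
  {B | Nonempty (ICptWitness 𝕜 C E B)}

/-- The topology `τ_{K_I}` of uniform convergence on `I`-compact sets. -/
def iCptTopology (C : BanachOpClass 𝕜) (E F : Type u)
    [NormedAddCommGroup E] [NormedSpace 𝕜 E] [CompleteSpace E]
    [NormedAddCommGroup F] [NormedSpace 𝕜 F] [CompleteSpace F] :
    TopologicalSpace (E →L[𝕜] F) := uniformOnTop 𝕜 E F (ICptSets 𝕜 C E)

/-- The absolutely convex hull of the terms of a sequence: all finite sums `Σ λᵢ • x_{nᵢ}`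
with `Σ ‖λᵢ‖ ≤ 1`. -/
def absConvexHullSeq {E : Type u} [NormedAddCommGroup E] [NormedSpace 𝕜 E]
    (x : ℕ → E) : Set E :=
  {y | ∃ (m : ℕ) (lam : Fin m → 𝕜) (idx : Fin m → ℕ),
    (∑ i, ‖lam i‖) ≤ 1 ∧ y = ∑ i, lam i • x (idx i)}

/-- `BR_q(E)`: the Bourgain–Reinov `q`-compact subsets of `E`. -/
def BRSets (q : ℝ) (E : Type u) [NormedAddCommGroup E] [NormedSpace 𝕜 E]
    [CompleteSpace E] : Set (Set E) :=
  {A | ∃ x : ℕ → E, Summable (fun n => ‖x n‖ ^ q) ∧ A ⊆ closure (absConvexHullSeq 𝕜 x)}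

/-- The topology `τ_{BR_q}` of uniform convergence on Bourgain–Reinov `q`-compact sets. -/
def brTopology (q : ℝ) (E F : Type u)
    [NormedAddCommGroup E] [NormedSpace 𝕜 E] [CompleteSpace E]
    [NormedAddCommGroup F] [NormedSpace 𝕜 F] [CompleteSpace F] :
    TopologicalSpace (E →L[𝕜] F) := uniformOnTop 𝕜 E F (BRSets 𝕜 q E)

/-- The Grothendieck property of an operator ideal. -/
def GrothendieckProperty (C : BanachOpClass 𝕜) : Prop :=
  ∀ (E : Type u) [NormedAddCommGroup E] [NormedSpace 𝕜 E] [CompleteSpace E] (A : Set E),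
    Bornology.IsBounded A →
    (∀ ε : ℝ, 0 < ε → ∃ Aε ∈ IBddSets 𝕜 C E, A ⊆ Aε + Metric.closedBall (0 : E) ε) →
    A ∈ IBddSets 𝕜 C E

/-- A witness that `T` factors as `T = R ∘ S` with `S` in the class `D` and `R` in the
class `C`, through some Banach space `Z`. -/
structure FactorWitness (D C : BanachOpClass 𝕜) (F E : Type u)
    [NormedAddCommGroup F] [NormedSpace 𝕜 F] [CompleteSpace F]
    [NormedAddCommGroup E] [NormedSpace 𝕜 E] [CompleteSpace E]
    (T : F →L[𝕜] E) : Type (u + 1) where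
  Z : Type u
  [iG : NormedAddCommGroup Z]
  [iS : NormedSpace 𝕜 Z]
  [iC : CompleteSpace Z]
  S : F →L[𝕜] Z
  R : Z →L[𝕜] E
  hS : S ∈ D F Z
  hR : R ∈ C Z E
  heq : T = R.comp S

open Uniformity UniformConvergence

section AuxST0

variable {𝕜 : Type u} [RCLike 𝕜]
variable {E F G H : Type u}
  [NormedAddCommGroup E] [NormedSpace 𝕜 E] [CompleteSpace E]
  [NormedAddCommGroup F] [NormedSpace 𝕜 F] [CompleteSpace F]
  [NormedAddCommGroup G] [NormedSpace 𝕜 G] [CompleteSpace G]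
  [NormedAddCommGroup H] [NormedSpace 𝕜 H] [CompleteSpace H]

lemma uniformOnTop_eq_CLM (𝔖 : Set (Set E)) :
    uniformOnTop 𝕜 E F 𝔖 = UniformConvergenceCLM.instTopologicalSpace (RingHom.id 𝕜) F 𝔖 :=
  (UniformConvergenceCLM.topologicalSpace_eq _ _ _).symm

lemma uniformOnTop_mono {𝔖₁ 𝔖₂ : Set (Set E)} (h : 𝔖₂ ⊆ 𝔖₁) :
    uniformOnTop 𝕜 E F 𝔖₁ ≤ uniformOnTop 𝕜 E F 𝔖₂ :=
  induced_mono (UniformSpace.toTopologicalSpace_mono (UniformOnFun.mono le_rfl h))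

lemma uniformOnTop_le_ptwise (𝔖 : Set (Set E)) (h : ∀ x : E, {x} ∈ 𝔖) :
    uniformOnTop 𝕜 E F 𝔖 ≤ ptwiseTopology 𝕜 E F := by
  refine induced_mono (UniformSpace.toTopologicalSpace_mono ?_)
  have key : ∀ s : Set E, s.Finite → ∀ V ∈ 𝓤 F,
      UniformOnFun.gen 𝔖 s V ∈ 𝓤 (E →ᵤ[𝔖] F) := by
    intro s hs V hV
    have hgen : UniformOnFun.gen 𝔖 s V = ⋂ x ∈ s, UniformOnFun.gen 𝔖 {x} V := by
      ext p; simp [UniformOnFun.gen]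
    rw [hgen]
    exact (Filter.biInter_mem hs).2 fun x _ =>
      UniformOnFun.gen_mem_uniformity F 𝔖 (h x) hV
  have hle : 𝓤 (E →ᵤ[𝔖] F) ≤ 𝓤 (E →ᵤ[{s : Set E | s.Finite}] F) := by
    rw [UniformOnFun.uniformity_eq (α := E) F {s : Set E | s.Finite}]
    exact le_iInf₂ fun s hs => le_iInf₂ fun V hV => le_principal_iff.2 (key s hs V hV)
  exact hle

lemma comp_continuous_fam (𝒜 : SetFamilyAssignment 𝕜)
    (u : E →L[𝕜] F) (w : G →L[𝕜] H)
    (himg : ∀ A ∈ 𝒜 E, ⇑u '' A ∈ 𝒜 F) :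
    @Continuous _ _ (famTopology 𝕜 𝒜 F G) (famTopology 𝕜 𝒜 E H)
      (fun v : F →L[𝕜] G => w.comp (v.comp u)) := by
  letI t1 : TopologicalSpace (F →L[𝕜] G) := famTopology 𝕜 𝒜 F G
  refine continuous_induced_rng.mpr ?_
  have h1 : UniformContinuous (fun g : F →ᵤ[𝒜 F] G =>
      UniformOnFun.ofFun (𝒜 E) ((UniformOnFun.toFun (𝒜 F) g) ∘ ⇑u)) :=
    UniformOnFun.precomp_uniformContinuous (fun A hA => himg A hA)
  have h2 : UniformContinuous (fun g : E →ᵤ[𝒜 E] G =>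
      UniformOnFun.ofFun (𝒜 E) (⇑w ∘ (UniformOnFun.toFun (𝒜 E) g))) :=
    UniformOnFun.postcomp_uniformContinuous w.uniformContinuous
  have h3 : Continuous (fun v : F →L[𝕜] G => UniformOnFun.ofFun (𝒜 F) ⇑v) :=
    continuous_induced_dom
  exact (h2.continuous.comp h1.continuous).comp h3

end AuxST0

/-- the topology of uniform convergence on a suitable family of bounded sets is
an ideal topology lying between the topology of pointwise convergence and the norm topology. -/
theorem statement0 (𝒜 : SetFamilyAssignment 𝕜)
    (hbdd : ∀ (E : Type u) [NormedAddCommGroup E] [NormedSpace 𝕜 E] [CompleteSpace E], ∀ A ∈ 𝒜 E, Bornology.IsBounded A)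
    (hsing : ∀ (E : Type u) [NormedAddCommGroup E] [NormedSpace 𝕜 E] [CompleteSpace E] (x : E), {x} ∈ 𝒜 E)
    (himg : ∀ (E F : Type u) [NormedAddCommGroup E] [NormedSpace 𝕜 E] [CompleteSpace E] [NormedAddCommGroup F] [NormedSpace 𝕜 F] [CompleteSpace F] (u : E →L[𝕜] F),
      ∀ A ∈ 𝒜 E, ⇑u '' A ∈ 𝒜 F) :
    -- (i) τ_𝒜 is a linear topology on each L(E;F)
    (∀ (E F : Type u) [NormedAddCommGroup E] [NormedSpace 𝕜 E] [CompleteSpace E] [NormedAddCommGroup F] [NormedSpace 𝕜 F] [CompleteSpace F],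
      @IsTopologicalAddGroup (E →L[𝕜] F) (famTopology 𝕜 𝒜 E F) _ ∧
      @ContinuousSMul 𝕜 (E →L[𝕜] F) _ _ (famTopology 𝕜 𝒜 E F)) ∧
    -- (ii) τ_𝒜 is an ideal topology
    (∀ C : BanachOpClass 𝕜, IsOperatorIdeal 𝕜 C →
      IsOperatorIdeal 𝕜 (closureClass 𝕜 (famTopology 𝕜 𝒜) C)) ∧
    -- (iii) τ_P ⊆ τ_𝒜 ⊆ ‖·‖ (recall: in Mathlib, finer topologies are smaller)
    (∀ (E F : Type u) [NormedAddCommGroup E] [NormedSpace 𝕜 E] [CompleteSpace E] [NormedAddCommGroup F] [NormedSpace 𝕜 F] [CompleteSpace F],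
      normTopology 𝕜 E F ≤ famTopology 𝕜 𝒜 E F ∧
      famTopology 𝕜 𝒜 E F ≤ ptwiseTopology 𝕜 E F) := by
  have hi : ∀ (E F : Type u) [NormedAddCommGroup E] [NormedSpace 𝕜 E] [CompleteSpace E]
      [NormedAddCommGroup F] [NormedSpace 𝕜 F] [CompleteSpace F],
      @IsTopologicalAddGroup (E →L[𝕜] F) (famTopology 𝕜 𝒜 E F) _ ∧
      @ContinuousSMul 𝕜 (E →L[𝕜] F) _ _ (famTopology 𝕜 𝒜 E F) := by
    intro E F _ _ _ _ _ _
    have he : famTopology 𝕜 𝒜 E F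
        = UniformConvergenceCLM.instTopologicalSpace (RingHom.id 𝕜) F (𝒜 E) :=
      uniformOnTop_eq_CLM (𝒜 E)
    constructor
    · rw [he]
      exact UniformConvergenceCLM.instIsTopologicalAddGroup (RingHom.id 𝕜) F (𝒜 E)
    · rw [he]
      exact UniformConvergenceCLM.continuousSMul (RingHom.id 𝕜) F (𝒜 E)
        (fun S hS => (NormedSpace.isVonNBounded_iff 𝕜).2 (hbdd E S hS))
  refine ⟨hi, ?_, ?_⟩
  · -- (ii)
    intro C hC
    constructor
    · intro E F _ _ _ _ _ _ a v hv
      letI tau : TopologicalSpace (E →L[𝕜] F) := famTopology 𝕜 𝒜 E F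
      haveI h1 : @IsTopologicalAddGroup (E →L[𝕜] F) tau _ := (hi E F).1
      haveI h2 : @ContinuousSMul 𝕜 (E →L[𝕜] F) _ _ tau := (hi E F).2
      have hcont : @Continuous _ _ tau tau (fun x : E →L[𝕜] F => a • x) := by
        have hs := h2.continuous_smul
        exact hs.comp (Continuous.prodMk continuous_const continuous_id)
      show a • v ∈ @closure _ tau (C E F)
      exact map_mem_closure hcont hv (fun x hx => hC.smul_mem E F a x hx)
    · intro E F _ _ _ _ _ _ v w hv hw
      letI tau : TopologicalSpace (E →L[𝕜] F) := famTopology 𝕜 𝒜 E F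
      haveI h1 : @IsTopologicalAddGroup (E →L[𝕜] F) tau _ := (hi E F).1
      haveI h3 : @ContinuousAdd (E →L[𝕜] F) tau _ := h1.toContinuousAdd
      show v + w ∈ @closure _ tau (C E F)
      exact map_mem_closure₂ continuous_add hv hw
        (fun x hx y hy => hC.add_mem E F x y hx hy)
    · intro E F _ _ _ _ _ _ v hv
      letI tau : TopologicalSpace (E →L[𝕜] F) := famTopology 𝕜 𝒜 E F
      show v ∈ @closure _ tau (C E F)
      exact subset_closure (hC.finiteRank_mem E F v hv)
    · intro E F G H _ _ _ _ _ _ _ _ _ _ _ _ u v w hv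
      letI tau1 : TopologicalSpace (F →L[𝕜] G) := famTopology 𝕜 𝒜 F G
      letI tau2 : TopologicalSpace (E →L[𝕜] H) := famTopology 𝕜 𝒜 E H
      show w.comp (v.comp u) ∈ @closure _ tau2 (C E H)
      exact map_mem_closure (f := fun v : F →L[𝕜] G => w.comp (v.comp u))
        (comp_continuous_fam 𝒜 u w (fun A hA => himg E F u A hA)) hv
        (fun x hx => hC.comp_mem E F G H u x w hx)
  · -- (iii)
    intro E F _ _ _ _ _ _
    constructor
    · have h1 : normTopology 𝕜 E F
          = uniformOnTop 𝕜 E F {s : Set E | Bornology.IsVonNBounded 𝕜 s} := by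
        rw [show (normTopology 𝕜 E F)
            = UniformConvergenceCLM.instTopologicalSpace (RingHom.id 𝕜) F
              {s : Set E | Bornology.IsVonNBounded 𝕜 s} from rfl]
        exact (uniformOnTop_eq_CLM _).symm
      rw [h1]
      exact uniformOnTop_mono
        (fun S hS => (NormedSpace.isVonNBounded_iff 𝕜).2 (hbdd E S hS))
    · exact uniformOnTop_le_ptwise (𝒜 E) (fun x => hsing E x)
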